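/- Let m = {m_1 < ... < m_r} be an r-element subset of {1,...,2r} and let m-bar = {m-bar_1 < ... < m-bar_r} be its complement. Then the set of pairs {(min(m_a, m-bar_a), max(m_a, m-bar_a)) : 1 <= a <= r} is a non-nesting perfect matching of {1,...,2r}. -/

import Mathlib

/-- `M` is a non-nesting perfect matching of `{1, ..., 2r}`: a set of pairs
`(i, j)` with `1 ≤ i < j ≤ 2r` covering `{1, ..., 2r}`, pairwise disjoint,
such that no two pairs `(a,b)`, `(c,d)` satisfy `a < c < d < b`. -/
def IsNNMatching (r : ℕ) (M : Finset (ℕ × ℕ)) : Prop :=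
  (∀ p ∈ M, 1 ≤ p.1 ∧ p.1 < p.2 ∧ p.2 ≤ 2 * r) ∧
  (∀ k ∈ Finset.Icc 1 (2 * r), ∃ p ∈ M, k = p.1 ∨ k = p.2) ∧
  (∀ p ∈ M, ∀ q ∈ M, p ≠ q →
    p.1 ≠ q.1 ∧ p.1 ≠ q.2 ∧ p.2 ≠ q.1 ∧ p.2 ≠ q.2) ∧
  (∀ p ∈ M, ∀ q ∈ M, ¬(p.1 < q.1 ∧ q.1 < q.2 ∧ q.2 < p.2))

instance (r : ℕ) (M : Finset (ℕ × ℕ)) : Decidable (IsNNMatching r M) := by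
  unfold IsNNMatching; infer_instance

/-- Let m be an r-element subset of {1,...,2r} with complement m̄, both listed
in increasing order. Then the pairs (min(m_a, m̄_a), max(m_a, m̄_a)) for
1 ≤ a ≤ r form a non-nesting perfect matching of {1,...,2r}. -/
theorem subset_gives_nnMatching (r : ℕ) (m : Finset ℕ)
    (hm : m ⊆ Finset.Icc 1 (2 * r)) (hcard : m.card = r) :
    IsNNMatching r
      ((List.zipWith (fun x y => (min x y, max x y))
        (m.sort (· ≤ ·)) ((Finset.Icc 1 (2 * r) \ m).sort (· ≤ ·))).toFinset) := by
  set c := Finset.Icc 1 (2 * r) \ m with hc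
  set s := m.sort (· ≤ ·) with hsdef
  set t := c.sort (· ≤ ·) with htdef
  have hccard : c.card = r := by
    rw [hc, Finset.card_sdiff_of_subset hm, Nat.card_Icc, hcard]; omega
  have hs : s.length = r := by rw [hsdef, Finset.length_sort, hcard]
  have ht : t.length = r := by rw [htdef, Finset.length_sort, hccard]
  have hss : s.Pairwise (· < ·) := m.sortedLT_sort.pairwise
  have hts : t.Pairwise (· < ·) := c.sortedLT_sort.pairwise
  have hsmem : ∀ (i : ℕ) (hi : i < s.length), s[i] ∈ m := fun i hi =>
    (Finset.mem_sort _).mp (List.getElem_mem hi)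
  have htmem : ∀ (i : ℕ) (hi : i < t.length), t[i] ∈ c := fun i hi =>
    (Finset.mem_sort _).mp (List.getElem_mem hi)
  have hzlen : (List.zipWith (fun x y => (min x y, max x y)) s t).length = r := by
    rw [List.length_zipWith, hs, ht, min_self]
  have hmemiff : ∀ p : ℕ × ℕ,
      p ∈ (List.zipWith (fun x y => (min x y, max x y)) s t).toFinset ↔
      ∃ (i : ℕ) (hi : i < r), p = (min (s[i]'(hs ▸ hi)) (t[i]'(ht ▸ hi)),
        max (s[i]'(hs ▸ hi)) (t[i]'(ht ▸ hi))) := by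
    intro p
    rw [List.mem_toFinset, List.mem_iff_getElem]
    constructor
    · rintro ⟨i, hi, rfl⟩
      rw [hzlen] at hi
      exact ⟨i, hi, by rw [List.getElem_zipWith]⟩
    · rintro ⟨i, hi, rfl⟩
      exact ⟨i, by omega, by rw [List.getElem_zipWith]⟩
  have hne : ∀ (i j : ℕ) (hi : i < s.length) (hj : j < t.length), s[i] ≠ t[j] := by
    intro i j hi hj h
    have h1 := hsmem i hi
    have h2 := Finset.mem_sdiff.mp (htmem j hj)
    exact h2.2 (h ▸ h1)
  have hsmono : ∀ (i j : ℕ) (hi : i < s.length) (hj : j < s.length), i < j → s[i] < s[j] := by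
    intro i j hi hj hij
    exact List.Pairwise.rel_get_of_lt hss (by exact_mod_cast hij)
  have htmono : ∀ (i j : ℕ) (hi : i < t.length) (hj : j < t.length), i < j → t[i] < t[j] := by
    intro i j hi hj hij
    exact List.Pairwise.rel_get_of_lt hts (by exact_mod_cast hij)
  refine ⟨?_, ?_, ?_, ?_⟩
  · intro p hp
    obtain ⟨i, hi, rfl⟩ := (hmemiff p).mp hp
    have h1 := Finset.mem_Icc.mp (hm (hsmem i (by omega)))
    have h2 := Finset.mem_sdiff.mp (htmem i (by omega))
    have h2' := Finset.mem_Icc.mp h2.1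
    have h3 := hne i i (by omega) (by omega)
    dsimp only
    omega
  · intro k hk
    have : k ∈ m ∨ k ∈ c := by
      have := Finset.mem_sdiff (s := Finset.Icc 1 (2 * r)) (t := m) (a := k)
      rw [← hc] at this
      rw [this]; tauto
    rcases this with h | h
    · have : k ∈ s := (Finset.mem_sort _).mpr h
      obtain ⟨i, hi, rfl⟩ := List.mem_iff_getElem.mp this
      refine ⟨(min (s[i]) (t[i]'(by omega)), max (s[i]) (t[i]'(by omega))),
        (hmemiff _).mpr ⟨i, by omega, rfl⟩, ?_⟩
      dsimp only; omega
    · have : k ∈ t := (Finset.mem_sort _).mpr h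
      obtain ⟨i, hi, rfl⟩ := List.mem_iff_getElem.mp this
      refine ⟨(min (s[i]'(by omega)) (t[i]), max (s[i]'(by omega)) (t[i])),
        (hmemiff _).mpr ⟨i, by omega, rfl⟩, ?_⟩
      dsimp only; omega
  · intro p hp q hq hpq
    obtain ⟨i, hi, rfl⟩ := (hmemiff p).mp hp
    obtain ⟨j, hj, rfl⟩ := (hmemiff q).mp hq
    have hij : i ≠ j := by rintro rfl; exact hpq rfl
    have h1 : s[i]'(by omega) ≠ s[j]'(by omega) := by
      rcases Nat.lt_or_ge i j with h | h
      · exact ne_of_lt (hsmono i j (by omega) (by omega) h)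
      · exact (ne_of_lt (hsmono j i (by omega) (by omega) (by omega))).symm
    have h2 : t[i]'(by omega) ≠ t[j]'(by omega) := by
      rcases Nat.lt_or_ge i j with h | h
      · exact ne_of_lt (htmono i j (by omega) (by omega) h)
      · exact (ne_of_lt (htmono j i (by omega) (by omega) (by omega))).symm
    have h3 := hne i j (by omega) (by omega)
    have h4 := hne j i (by omega) (by omega)
    have h5 := hne i i (by omega) (by omega)
    have h6 := hne j j (by omega) (by omega)
    dsimp only
    omega
  · intro p hp q hq
    obtain ⟨i, hi, rfl⟩ := (hmemiff p).mp hp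
    obtain ⟨j, hj, rfl⟩ := (hmemiff q).mp hq
    rintro ⟨hab, -, hcd⟩
    dsimp only at hab hcd
    rcases Nat.lt_trichotomy i j with h | h | h
    · have := max_lt_max (hsmono i j (by omega) (by omega) h)
        (htmono i j (by omega) (by omega) h)
      omega
    · subst h; omega
    · have := min_lt_min (hsmono j i (by omega) (by omega) h)
        (htmono j i (by omega) (by omega) h)
      omega
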